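/- Fix n ∈ ℕ. Consider the duplicate-free lists of natural numbers of length n whose set of entries is exactly {1, …, n} (i.e. the sequences (σ(1), …, σ(n)) for permutations σ of {1, …, n}). The number of isotopy equivalence classes of such lists equals the n-th Catalan number C_n = binom(2n, n)/(n+1). -/

import Mathlib

/-- An elementary move on a duplicate-free list of natural numbers: transpose two
adjacent entries `x = i_j` and `y = i_{j+1}` for which there exists a later entry
`p = i_q` (with `q > j+1`) such that `x < p < y` or `x > p > y`. -/
def ElemMove (l l' : List ℕ) : Prop :=
  l.Nodup ∧ ∃ (a b : List ℕ) (x y : ℕ),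
    l = a ++ x :: y :: b ∧ l' = a ++ y :: x :: b ∧
    ∃ p ∈ b, (x < p ∧ p < y) ∨ (y < p ∧ p < x)

/-- Isotopy equivalence: the smallest equivalence relation generated by elementary moves. -/
def IsoEquiv : List ℕ → List ℕ → Prop := Relation.EqvGen ElemMove

/-- The set of duplicate-free lists of natural numbers of length `n` whose set of
entries is exactly `{1, …, n}` (i.e. permutations of `{1, …, n}` written as sequences). -/
def PermList (n : ℕ) : Set (List ℕ) :=
  {l | l.length = n ∧ l.Nodup ∧ ∀ x, x ∈ l ↔ x ∈ Finset.Icc 1 n}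

namespace IsoCat

/-- Binary search tree insertion. -/
def bIns (x : ℕ) : BinaryTree ℕ → BinaryTree ℕ
  | BinaryTree.nil => BinaryTree.node x BinaryTree.nil BinaryTree.nil
  | BinaryTree.node v l r => if x < v then BinaryTree.node v (bIns x l) r else BinaryTree.node v l (bIns x r)

/-- The BST obtained by inserting the entries of `l` from right to left. -/
def treeOf (l : List ℕ) : BinaryTree ℕ := l.foldr bIns BinaryTree.nil

/-- Inorder traversal. -/
def toL : BinaryTree ℕ → List ℕ
  | BinaryTree.nil => []
  | BinaryTree.node v l r => toL l ++ v :: toL r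

/-- Strict binary search tree property. -/
def isBST : BinaryTree ℕ → Prop
  | BinaryTree.nil => True
  | BinaryTree.node v l r => (∀ a ∈ toL l, a < v) ∧ (∀ a ∈ toL r, v < a) ∧ isBST l ∧ isBST r

def shape : BinaryTree ℕ → BinaryTree Unit := BinaryTree.map fun _ => ()

/-- Canonical list producing a given tree. -/
def canon : BinaryTree ℕ → List ℕ
  | BinaryTree.nil => []
  | BinaryTree.node v l r => canon l ++ canon r ++ [v]

@[simp] lemma toL_nil : toL BinaryTree.nil = [] := rfl
@[simp] lemma toL_node (v l r) : toL (BinaryTree.node v l r) = toL l ++ v :: toL r := rfl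
@[simp] lemma canon_nil : canon BinaryTree.nil = [] := rfl
@[simp] lemma canon_node (v l r) : canon (BinaryTree.node v l r) = canon l ++ canon r ++ [v] := rfl
@[simp] lemma shape_nil : shape BinaryTree.nil = BinaryTree.nil := rfl
@[simp] lemma shape_node (v l r) :
    shape (BinaryTree.node v l r) = BinaryTree.node () (shape l) (shape r) := rfl

lemma mem_bIns (a x : ℕ) (t : BinaryTree ℕ) : a ∈ toL (bIns x t) ↔ a = x ∨ a ∈ toL t := by
  induction t with
  | nil => simp [bIns]
  | node v l r ihl ihr =>
    by_cases h : x < v <;> simp [bIns, h, ihl, ihr] <;> tauto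

lemma isBST_bIns {t : BinaryTree ℕ} (h : isBST t) {x : ℕ} (hx : x ∉ toL t) : isBST (bIns x t) := by
  induction t with
  | nil => simp [bIns, isBST]
  | node v l r ihl ihr =>
    obtain ⟨hl, hr, bl, br⟩ := h
    simp only [toL_node, List.mem_append, List.mem_cons] at hx
    push_neg at hx
    obtain ⟨hxl, hxv, hxr⟩ := hx
    by_cases h : x < v
    · have : isBST (BinaryTree.node v (bIns x l) r) := by
        refine ⟨?_, hr, ihl bl hxl, br⟩
        intro a ha
        rcases (mem_bIns a x l).1 ha with rfl | ha
        · exact h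
        · exact hl a ha
      simpa [bIns, h] using this
    · have hv : v < x := lt_of_le_of_ne (not_lt.1 h) (Ne.symm hxv)
      have : isBST (BinaryTree.node v l (bIns x r)) := by
        refine ⟨hl, ?_, bl, ihr br hxr⟩
        intro a ha
        rcases (mem_bIns a x r).1 ha with rfl | ha
        · exact hv
        · exact hr a ha
      simpa [bIns, h] using this

lemma mem_treeOf (a : ℕ) (l : List ℕ) : a ∈ toL (treeOf l) ↔ a ∈ l := by
  induction l with
  | nil => simp [treeOf]
  | cons x m ih =>
    simp only [treeOf, List.foldr_cons] at *
    rw [mem_bIns]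
    simp [ih]

lemma isBST_treeOf {l : List ℕ} (h : l.Nodup) : isBST (treeOf l) := by
  induction l with
  | nil => trivial
  | cons x m ih =>
    have := List.nodup_cons.1 h
    exact isBST_bIns (ih this.2) (by rw [mem_treeOf]; exact this.1)

/-- Key commutation: inserting `x` then `y` equals inserting `y` then `x`
provided some element strictly between them is already in the tree. -/
lemma bIns_comm {t : BinaryTree ℕ} (hb : isBST t) {x y p : ℕ} (hp : p ∈ toL t)
    (hbet : (x < p ∧ p < y) ∨ (y < p ∧ p < x)) :
    bIns x (bIns y t) = bIns y (bIns x t) := by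
  induction t with
  | nil => simp at hp
  | node v l r ihl ihr =>
    obtain ⟨hl, hr, bl, br⟩ := hb
    by_cases hx : x < v <;> by_cases hy : y < v
    · -- both go left; p must be in l
      have hpl : p ∈ toL l := by
        simp only [toL_node, List.mem_append, List.mem_cons] at hp
        rcases hp with h | rfl | h
        · exact h
        · omega
        · have := hr p h; omega
      simp [bIns, hx, hy, mem_bIns, ihl bl hpl]
    · simp [bIns, hx, hy]
    · simp [bIns, hx, hy]
    · -- both go right; p must be in r
      have hpr : p ∈ toL r := by
        simp only [toL_node, List.mem_append, List.mem_cons] at hp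
        rcases hp with h | rfl | h
        · have := hl p h; omega
        · omega
        · exact h
      simp [bIns, hx, hy, ihr br hpr]

lemma treeOf_append (a b : List ℕ) : treeOf (a ++ b) = a.foldr bIns (treeOf b) := by
  simp [treeOf]

lemma treeOf_elemMove {l l' : List ℕ} (h : ElemMove l l') : treeOf l = treeOf l' := by
  obtain ⟨hnd, a, b, x, y, rfl, rfl, p, hpb, hbet⟩ := h
  rw [treeOf_append, treeOf_append]
  congr 1
  show treeOf (x :: y :: b) = treeOf (y :: x :: b)
  have hndb : b.Nodup := by
    have := hnd
    simp only [List.nodup_append, List.nodup_cons] at this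
    tauto
  exact bIns_comm (isBST_treeOf hndb) ((mem_treeOf p b).2 hpb) hbet

lemma treeOf_isoEquiv {l l' : List ℕ} (h : IsoEquiv l l') : treeOf l = treeOf l' := by
  induction h with
  | rel _ _ h => exact treeOf_elemMove h
  | refl => rfl
  | symm _ _ _ ih => exact ih.symm
  | trans _ _ _ _ _ ih1 ih2 => exact ih1.trans ih2

lemma perm_of_elemMove {l l' : List ℕ} (h : ElemMove l l') : l.Perm l' := by
  obtain ⟨_, a, b, x, y, rfl, rfl, _⟩ := h
  exact (List.Perm.swap y x b).append_left a

lemma perm_of_isoEquiv {l l' : List ℕ} (h : IsoEquiv l l') : l.Perm l' := by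
  induction h with
  | rel _ _ h => exact perm_of_elemMove h
  | refl => rfl
  | symm _ _ _ ih => exact ih.symm
  | trans _ _ _ _ _ ih1 ih2 => exact ih1.trans ih2

lemma elemMove_context {u u' c d : List ℕ} (h : ElemMove u u')
    (hnd : (c ++ u ++ d).Nodup) : ElemMove (c ++ u ++ d) (c ++ u' ++ d) := by
  obtain ⟨_, a, b, x, y, rfl, rfl, p, hpb, hbet⟩ := h
  refine ⟨hnd, c ++ a, b ++ d, x, y, by simp, by simp, p, by simp [hpb], hbet⟩

lemma isoEquiv_context {c d : List ℕ} : ∀ {u u'}, IsoEquiv u u' →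
    (c ++ u ++ d).Nodup → IsoEquiv (c ++ u ++ d) (c ++ u' ++ d) := by
  intro u u' h
  induction h with
  | rel _ _ h => exact fun hnd => Relation.EqvGen.rel _ _ (elemMove_context h hnd)
  | refl => exact fun _ => Relation.EqvGen.refl _
  | symm a b hab ih =>
    intro hnd
    have hperm : (c ++ a ++ d).Perm (c ++ b ++ d) :=
      ((List.Perm.refl c).append (perm_of_isoEquiv hab)).append (List.Perm.refl d)
    exact Relation.EqvGen.symm _ _ (ih (hperm.nodup_iff.2 hnd))
  | trans a b e hab _ ih1 ih2 =>
    intro hnd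
    have hperm : (c ++ a ++ d).Perm (c ++ b ++ d) := by
      refine List.Perm.append ?_ (List.Perm.refl d)
      exact List.Perm.append (List.Perm.refl c) (perm_of_isoEquiv hab)
    exact Relation.EqvGen.trans _ _ _ (ih1 hnd) (ih2 (hperm.nodup_iff.1 hnd))

lemma isoEquiv_refl (l : List ℕ) : IsoEquiv l l := Relation.EqvGen.refl l

/-- Bubble a large element right past small ones, with witness `v` at the end. -/
lemma bubble {v x : ℕ} (hvx : v < x) : ∀ (s r : List ℕ), (∀ a ∈ s, a < v) →
    (x :: s ++ r ++ [v]).Nodup → IsoEquiv (x :: s ++ r ++ [v]) (s ++ x :: r ++ [v]) := by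
  intro s
  induction s with
  | nil => intro r _ _; exact isoEquiv_refl _
  | cons a s ih =>
    intro r hs hnd
    have step : ElemMove (x :: a :: (s ++ r ++ [v])) (a :: x :: (s ++ r ++ [v])) := by
      refine ⟨by simpa using hnd, [], s ++ r ++ [v], x, a, rfl, rfl, v, by simp, ?_⟩
      right; exact ⟨hs a (by simp), hvx⟩
    have h1 : IsoEquiv (x :: a :: s ++ r ++ [v]) (a :: x :: s ++ r ++ [v]) := by
      apply Relation.EqvGen.rel
      simpa using step
    refine Relation.EqvGen.trans _ _ _ h1 ?_
    have hnd2 : (a :: x :: s ++ r ++ [v]).Nodup :=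
      (List.Perm.swap a x (s ++ r ++ [v])).nodup_iff.1 hnd
    have := isoEquiv_context (c := [a]) (d := [])
      (ih r (fun b hb => hs b (by simp [hb])) hnd2.of_cons) (by simpa using hnd2)
    simpa [IsoEquiv] using this

/-- Stable partition around `v` by elementary moves. -/
lemma partition_moves (v : ℕ) : ∀ (m : List ℕ), (∀ a ∈ m, a ≠ v) → (m ++ [v]).Nodup →
    IsoEquiv (m ++ [v])
      ((m.filter (fun a => a < v)) ++ (m.filter (fun a => ¬ a < v)) ++ [v]) := by
  intro m
  induction m with
  | nil => intro _ _; simp; exact isoEquiv_refl _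
  | cons x m ih =>
    intro hne hnd
    have hndm : (m ++ [v]).Nodup := by
      simp only [List.cons_append, List.nodup_cons] at hnd; exact hnd.2
    have hperm : (m ++ [v]).Perm
        ((m.filter (fun a => a < v)) ++ (m.filter (fun a => ¬ a < v)) ++ [v]) :=
      perm_of_isoEquiv (ih (fun a ha => hne a (by simp [ha])) hndm)
    have hih : IsoEquiv (x :: (m ++ [v]))
        (x :: ((m.filter (fun a => a < v)) ++ (m.filter (fun a => ¬ a < v)) ++ [v])) := by
      have := isoEquiv_context (c := [x]) (d := [])
        (ih (fun a ha => hne a (by simp [ha])) hndm) (by simpa using hnd)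
      simpa using this
    have e1 : List.filter (fun a => a < v) (x :: m) =
        if x < v then x :: List.filter (fun a => a < v) m
        else List.filter (fun a => a < v) m := by
      by_cases hx : x < v <;> simp [hx]
    have e2 : List.filter (fun a => ¬ a < v) (x :: m) =
        if x < v then List.filter (fun a => ¬ a < v) m
        else x :: List.filter (fun a => ¬ a < v) m := by
      by_cases hx : x < v
      · simp [List.filter_cons, hx]
      · simp [List.filter_cons, hx, not_lt.1 hx]
    by_cases hx : x < v
    · rw [e1, e2]; simp only [if_pos hx]; simpa using hih
    · have hvx : v < x := lt_of_le_of_ne (not_lt.1 hx) (Ne.symm (hne x (by simp)))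
      refine Relation.EqvGen.trans _ _ _ (by simpa [IsoEquiv] using hih) ?_
      have hnd2 : (x :: (m.filter (fun a => a < v)) ++
          (m.filter (fun a => ¬ a < v)) ++ [v]).Nodup := by
        have : (x :: (m ++ [v])).Perm
            (x :: ((m.filter (fun a => a < v)) ++ (m.filter (fun a => ¬ a < v)) ++ [v])) :=
          hperm.cons x
        have := this.nodup_iff.1 (by simpa using hnd)
        simpa using this
      have hb := bubble hvx (m.filter (fun a => a < v)) (m.filter (fun a => ¬ a < v))
        (fun a ha => by simpa using (List.mem_filter.1 ha).2) (by simpa using hnd2)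
      rw [e1, e2]; simp only [if_neg hx]
      simpa [IsoEquiv] using hb

lemma foldr_bIns_lt {v : ℕ} {L R : BinaryTree ℕ} : ∀ {A : List ℕ}, (∀ a ∈ A, a < v) →
    A.foldr bIns (BinaryTree.node v L R) = BinaryTree.node v (A.foldr bIns L) R := by
  intro A
  induction A with
  | nil => intro _; rfl
  | cons x A ih =>
    intro h
    have hx : x < v := h x (by simp)
    simp only [List.foldr_cons, ih (fun a ha => h a (by simp [ha]))]
    simp [bIns, hx]

lemma foldr_bIns_ge {v : ℕ} {L R : BinaryTree ℕ} : ∀ {A : List ℕ}, (∀ a ∈ A, ¬ a < v) →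
    A.foldr bIns (BinaryTree.node v L R) = BinaryTree.node v L (A.foldr bIns R) := by
  intro A
  induction A with
  | nil => intro _; rfl
  | cons x A ih =>
    intro h
    have hx : ¬ x < v := h x (by simp)
    simp only [List.foldr_cons, ih (fun a ha => h a (by simp [ha]))]
    simp [bIns, hx]

lemma treeOf_append_singleton (m : List ℕ) (v : ℕ) :
    treeOf (m ++ [v]) = BinaryTree.node v (treeOf (m.filter (fun a => a < v)))
      (treeOf (m.filter (fun a => ¬ a < v))) := by
  rw [treeOf_append]
  have : treeOf [v] = BinaryTree.node v BinaryTree.nil BinaryTree.nil := rfl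
  rw [this]
  induction m with
  | nil => simp [treeOf]
  | cons x m ih =>
    by_cases hx : x < v
    · simp only [List.foldr_cons, ih]
      simp [bIns, hx, List.filter_cons, treeOf]
    · simp only [List.foldr_cons, ih]
      simp [bIns, hx, List.filter_cons, treeOf, not_lt.1 hx]

lemma mem_canon (a : ℕ) (t : BinaryTree ℕ) : a ∈ canon t ↔ a ∈ toL t := by
  induction t with
  | nil => simp
  | node v l r ihl ihr => simp [ihl, ihr]; tauto

lemma canon_perm_toL (t : BinaryTree ℕ) : (canon t).Perm (toL t) := by
  induction t with
  | nil => rfl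
  | node v l r ihl ihr =>
    have h1 : (canon l ++ (canon r ++ [v])).Perm (toL l ++ (v :: toL r)) :=
      ihl.append ((List.perm_append_singleton v (canon r)).trans (ihr.cons v))
    simpa [List.append_assoc] using h1

lemma treeOf_canon : ∀ {t : BinaryTree ℕ}, isBST t → treeOf (canon t) = t := by
  intro t
  induction t with
  | nil => intro _; rfl
  | node v l r ihl ihr =>
    intro h
    obtain ⟨hl, hr, bl, br⟩ := h
    have h1 : treeOf (canon r ++ [v]) = BinaryTree.node v BinaryTree.nil (treeOf (canon r)) := by
      rw [treeOf_append]
      have : treeOf [v] = BinaryTree.node v BinaryTree.nil BinaryTree.nil := rfl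
      rw [this]
      exact foldr_bIns_ge (fun a ha => not_lt.2 (le_of_lt (hr a ((mem_canon a r).1 ha))))
    calc treeOf (canon l ++ canon r ++ [v]) = treeOf (canon l ++ (canon r ++ [v])) := by
          rw [List.append_assoc]
      _ = (canon l).foldr bIns (treeOf (canon r ++ [v])) := treeOf_append _ _
      _ = (canon l).foldr bIns (BinaryTree.node v BinaryTree.nil (treeOf (canon r))) := by rw [h1]
      _ = BinaryTree.node v ((canon l).foldr bIns BinaryTree.nil) (treeOf (canon r)) :=
          foldr_bIns_lt (fun a ha => hl a ((mem_canon a l).1 ha))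
      _ = BinaryTree.node v l r := by
          show BinaryTree.node v (treeOf (canon l)) (treeOf (canon r)) = _
          rw [ihl bl, ihr br]

lemma iso_canon : ∀ (n : ℕ) (l : List ℕ), l.length ≤ n → l.Nodup →
    IsoEquiv l (canon (treeOf l)) := by
  intro n
  induction n with
  | zero =>
    intro l hlen _
    have : l = [] := List.length_eq_zero_iff.1 (Nat.le_zero.1 hlen)
    subst this
    exact isoEquiv_refl _
  | succ n ih =>
    intro l hlen hnd
    rcases l.eq_nil_or_concat with rfl | ⟨m, v, rfl⟩
    · exact isoEquiv_refl _
    rw [List.concat_eq_append] at *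
    set m1 := m.filter (fun a => a < v) with hm1
    set m2 := m.filter (fun a => ¬ a < v) with hm2
    have hvm : v ∉ m := by
      intro hv
      exact (List.disjoint_of_nodup_append hnd) hv (by simp)
    have hndm : m.Nodup := (List.nodup_append.1 hnd).1
    have hstep1 : IsoEquiv (m ++ [v]) (m1 ++ m2 ++ [v]) :=
      partition_moves v m (fun a ha h => hvm (h ▸ ha)) hnd
    have hperm1 : (m ++ [v]).Perm (m1 ++ m2 ++ [v]) := perm_of_isoEquiv hstep1
    have hnd1 : (m1 ++ m2 ++ [v]).Nodup := hperm1.nodup_iff.1 hnd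
    have hlm : m.length ≤ n := by simpa using hlen
    have ih1 : IsoEquiv m1 (canon (treeOf m1)) :=
      ih m1 (le_trans (List.length_filter_le _ _) hlm) (hndm.filter _)
    have ih2 : IsoEquiv m2 (canon (treeOf m2)) :=
      ih m2 (le_trans (List.length_filter_le _ _) hlm) (hndm.filter _)
    set c1 := canon (treeOf m1) with hc1
    set c2 := canon (treeOf m2) with hc2
    have hpc1 : m1.Perm c1 := perm_of_isoEquiv ih1
    have hpc2 : m2.Perm c2 := perm_of_isoEquiv ih2
    have hstep2 : IsoEquiv (m1 ++ m2 ++ [v]) (c1 ++ m2 ++ [v]) := by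
      have := isoEquiv_context (c := []) (d := m2 ++ [v]) ih1
        (by simpa [List.append_assoc] using hnd1)
      simpa [List.append_assoc] using this
    have hnd2 : (c1 ++ m2 ++ [v]).Nodup := by
      have : (m1 ++ m2 ++ [v]).Perm (c1 ++ m2 ++ [v]) :=
        (hpc1.append (List.Perm.refl m2)).append (List.Perm.refl [v])
      exact this.nodup_iff.1 hnd1
    have hstep3 : IsoEquiv (c1 ++ m2 ++ [v]) (c1 ++ c2 ++ [v]) := by
      have := isoEquiv_context (c := c1) (d := [v]) ih2
        (by simpa [List.append_assoc] using hnd2)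
      simpa [List.append_assoc] using this
    have hfinal : canon (treeOf (m ++ [v])) = c1 ++ c2 ++ [v] := by
      rw [treeOf_append_singleton]
      simp [hc1, hc2, hm1, hm2]
    rw [hfinal]
    exact Relation.EqvGen.trans _ _ _ hstep1
      (Relation.EqvGen.trans _ _ _ hstep2 hstep3)

lemma iso_of_treeOf_eq {l l' : List ℕ} (h : l.Nodup) (h' : l'.Nodup)
    (ht : treeOf l = treeOf l') : IsoEquiv l l' := by
  have h1 := iso_canon l.length l le_rfl h
  have h2 := iso_canon l'.length l' le_rfl h'
  rw [ht] at h1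
  exact Relation.EqvGen.trans _ _ _ h1 (Relation.EqvGen.symm _ _ h2)

lemma length_toL (t : BinaryTree ℕ) : (toL t).length = t.numNodes := by
  induction t with
  | nil => rfl
  | node v l r ihl ihr => simp [BinaryTree.numNodes, ihl, ihr]; omega

lemma numNodes_shape (t : BinaryTree ℕ) : (shape t).numNodes = t.numNodes := by
  induction t with
  | nil => rfl
  | node v l r ihl ihr =>
    show (BinaryTree.node () (shape l) (shape r)).numNodes = _
    simp [BinaryTree.numNodes, ihl, ihr]

lemma sorted_toL : ∀ {t : BinaryTree ℕ}, isBST t → (toL t).Pairwise (· < ·) := by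
  intro t
  induction t with
  | nil => intro _; simp
  | node v l r ihl ihr =>
    intro h
    obtain ⟨hl, hr, bl, br⟩ := h
    rw [toL_node]
    refine List.pairwise_append.2 ⟨ihl bl, ?_, ?_⟩
    · exact List.pairwise_cons.2 ⟨hr, ihr br⟩
    · intro a ha b hb
      rcases List.mem_cons.1 hb with rfl | hb
      · exact hl a ha
      · exact lt_trans (hl a ha) (hr b hb)

lemma eq_of_shape_toL : ∀ {t1 t2 : BinaryTree ℕ}, shape t1 = shape t2 → toL t1 = toL t2 →
    t1 = t2 := by
  intro t1
  induction t1 with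
  | nil =>
    intro t2 hs _
    cases t2 with
    | nil => rfl
    | node v l r => simp at hs
  | node v l r ihl ihr =>
    intro t2 hs ht
    cases t2 with
    | nil => simp at hs
    | node v' l' r' =>
      simp only [shape_node, BinaryTree.node.injEq] at hs
      obtain ⟨_, hsl, hsr⟩ := hs
      have hlen : (toL l).length = (toL l').length := by
        rw [length_toL, length_toL, ← numNodes_shape, ← numNodes_shape, hsl]
      simp only [toL_node] at ht
      obtain ⟨h1, h2⟩ := List.append_inj ht hlen
      injection h2 with h2a h2b
      rw [ihl hsl h1, h2a, ihr hsr h2b]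

def labelAux : BinaryTree Unit → ℕ → BinaryTree ℕ
  | BinaryTree.nil, _ => BinaryTree.nil
  | BinaryTree.node _ l r, k =>
    BinaryTree.node (k + l.numNodes + 1) (labelAux l k) (labelAux r (k + l.numNodes + 1))

lemma shape_labelAux : ∀ (s : BinaryTree Unit) (k : ℕ), shape (labelAux s k) = s := by
  intro s
  induction s with
  | nil => intro _; rfl
  | node u l r ihl ihr => intro k; simp [labelAux, ihl, ihr]

lemma mem_labelAux (a : ℕ) : ∀ (s : BinaryTree Unit) (k : ℕ),
    a ∈ toL (labelAux s k) ↔ k + 1 ≤ a ∧ a ≤ k + s.numNodes := by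
  intro s
  induction s with
  | nil => intro k; simp [labelAux, BinaryTree.numNodes]
  | node u l r ihl ihr =>
    intro k
    simp only [labelAux, toL_node, List.mem_append, List.mem_cons, ihl, ihr,
      BinaryTree.numNodes]
    omega

lemma isBST_labelAux : ∀ (s : BinaryTree Unit) (k : ℕ), isBST (labelAux s k) := by
  intro s
  induction s with
  | nil => intro _; trivial
  | node u l r ihl ihr =>
    intro k
    refine ⟨?_, ?_, ihl k, ihr _⟩
    · intro a ha
      have := (mem_labelAux a l k).1 ha
      omega
    · intro a ha
      have := (mem_labelAux a r (k + l.numNodes + 1)).1 ha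
      omega

lemma perm_toL_treeOf {l : List ℕ} (h : l.Nodup) : (toL (treeOf l)).Perm l := by
  have hnd : (toL (treeOf l)).Nodup :=
    (sorted_toL (isBST_treeOf h)).nodup
  exact (List.perm_ext_iff_of_nodup hnd h).2 (fun a => mem_treeOf a l)

lemma numNodes_shape_treeOf {n : ℕ} (l : PermList n) :
    (shape (treeOf l.1)).numNodes = n := by
  obtain ⟨l, hlen, hnd, _⟩ := l
  rw [numNodes_shape, ← length_toL, (perm_toL_treeOf hnd).length_eq, hlen]

def fMap (n : ℕ) : Quot (fun l l' : PermList n => IsoEquiv l.1 l'.1) →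
    {s : BinaryTree Unit // s ∈ BinaryTree.treesOfNumNodesEq n} :=
  Quot.lift (fun l => ⟨shape (treeOf l.1), by
      rw [BinaryTree.mem_treesOfNumNodesEq]; exact numNodes_shape_treeOf l⟩)
    (fun a b h => Subtype.ext (congrArg shape (treeOf_isoEquiv h)))

end IsoCat

open IsoCat in
/-- The number of isotopy equivalence classes of permutations of `{1, …, n}` is the
`n`-th Catalan number `C_n = binom(2n, n)/(n+1)`. -/
theorem numClasses_eq_catalan (n : ℕ) :
    Nat.card (Quot (fun l l' : PermList n => IsoEquiv l.1 l'.1))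
      = Nat.choose (2 * n) n / (n + 1) := by
  classical
  haveI : IsAntisymm ℕ (· < ·) := ⟨fun a b h h' => absurd h' (asymm h)⟩
  have hinj : Function.Injective (fMap n) := by
    intro q1 q2
    refine Quot.induction_on q1 (fun a => Quot.induction_on q2 (fun b hab => ?_))
    obtain ⟨la, hlena, hnda, hmema⟩ := a
    obtain ⟨lb, hlenb, hndb, hmemb⟩ := b
    have hs : shape (treeOf la) = shape (treeOf lb) := congrArg Subtype.val hab
    have hpermab : la.Perm lb :=
      (List.perm_ext_iff_of_nodup hnda hndb).2 (fun x => (hmema x).trans (hmemb x).symm)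
    have hpermt : (toL (treeOf la)).Perm (toL (treeOf lb)) :=
      ((perm_toL_treeOf hnda).trans hpermab).trans (perm_toL_treeOf hndb).symm
    have htoL : toL (treeOf la) = toL (treeOf lb) :=
      hpermt.eq_of_pairwise' (sorted_toL (isBST_treeOf hnda))
        (sorted_toL (isBST_treeOf hndb))
    have ht : treeOf la = treeOf lb := eq_of_shape_toL hs htoL
    exact Quot.sound (iso_of_treeOf_eq hnda hndb ht)
  have hsurj : Function.Surjective (fMap n) := by
    rintro ⟨s, hs⟩
    rw [BinaryTree.mem_treesOfNumNodesEq] at hs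
    set t := labelAux s 0 with htdef
    have hbst : isBST t := isBST_labelAux s 0
    have hmemt : ∀ a, a ∈ toL t ↔ a ∈ Finset.Icc 1 n := by
      intro a
      rw [mem_labelAux, Finset.mem_Icc, hs]
      omega
    have hndt : (toL t).Nodup := (sorted_toL hbst).nodup
    have hpc : (canon t).Perm (toL t) := canon_perm_toL t
    have hndc : (canon t).Nodup := hpc.nodup_iff.2 hndt
    have hlenc : (canon t).length = n := by
      rw [hpc.length_eq, length_toL, ← numNodes_shape, shape_labelAux, hs]
    have hmemc : ∀ x, x ∈ canon t ↔ x ∈ Finset.Icc 1 n := by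
      intro x
      rw [mem_canon]
      exact hmemt x
    refine ⟨Quot.mk _ ⟨canon t, hlenc, hndc, hmemc⟩, ?_⟩
    apply Subtype.ext
    show shape (treeOf (canon t)) = s
    rw [treeOf_canon hbst, shape_labelAux]
  have hcard := Nat.card_eq_of_bijective (fMap n) ⟨hinj, hsurj⟩
  rw [hcard]
  have : Nat.card {s : BinaryTree Unit // s ∈ BinaryTree.treesOfNumNodesEq n}
      = (BinaryTree.treesOfNumNodesEq n).card := Nat.card_eq_finsetCard _
  rw [this, BinaryTree.treesOfNumNodesEq_card_eq_catalan, catalan_eq_centralBinom_div]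
  rfl
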